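/- Let V = ℂ^n, Σ ≤ GL(V) a finite group, G ≤ Σ with ℓ = [Σ:G], and 𝒮 = Σ/G the set of left cosets with its Σ-action. For each reflecting hyperplane P of Σ, with C_P the pointwise stabilizer of P, g_P a generator of C_P, and b_i(g_P) the number of orbits of size i of ⟨g_P⟩ on 𝒮, set e(G,P) = (|C_P|/2)·Σ_{i≥2} b_i(g_P)·(i−1). Then Σ_{P∈𝒫} e(G,P) = (ℓ/2)·( |ℛ(Σ)| − |ℛ(G)| ), where 𝒫 is the set of all reflecting hyperplanes, ℛ(Σ) the set of all reflections in Σ, and ℛ(G) = ℛ(Σ) ∩ G. -/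

import Mathlib

open MvPolynomial

/-- The fixed-point subspace of a linear automorphism `g` of `ℂ^n`. -/
noncomputable def fixedSubspace {n : ℕ} (g : (Fin n → ℂ) ≃ₗ[ℂ] (Fin n → ℂ)) :
    Submodule ℂ (Fin n → ℂ) where
  carrier := {v | g v = v}
  add_mem' := by
    intro a b ha hb
    simp only [Set.mem_setOf_eq] at *
    rw [map_add, ha, hb]
  zero_mem' := by simp
  smul_mem' := by
    intro c v hv
    simp only [Set.mem_setOf_eq] at *
    rw [map_smul, hv]

/-- `g` is a reflection: a nonidentity linear automorphism whose fixed-point subspace is a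
hyperplane of `ℂ^n`. -/
def IsReflection {n : ℕ} (g : (Fin n → ℂ) ≃ₗ[ℂ] (Fin n → ℂ)) : Prop :=
  g ≠ 1 ∧ Module.finrank ℂ (fixedSubspace g) = n - 1

/-- The set of reflecting hyperplanes of a group `Sg` of linear automorphisms of `ℂ^n`. -/
def reflHyperplanes {n : ℕ} (Sg : Subgroup ((Fin n → ℂ) ≃ₗ[ℂ] (Fin n → ℂ))) :
    Set (Submodule ℂ (Fin n → ℂ)) :=
  {P | ∃ g ∈ Sg, IsReflection g ∧ fixedSubspace g = P}

/-- The subgroup `C_P` of elements of `Sg` fixing `P` pointwise. -/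
noncomputable def pointwiseStab {n : ℕ} (Sg : Subgroup ((Fin n → ℂ) ≃ₗ[ℂ] (Fin n → ℂ)))
    (P : Submodule ℂ (Fin n → ℂ)) : Subgroup ↥Sg where
  carrier := {g | ∀ v ∈ P, (g : (Fin n → ℂ) ≃ₗ[ℂ] (Fin n → ℂ)) v = v}
  one_mem' := by
    intro v hv
    rfl
  mul_mem' := by
    intro a b ha hb v hv
    have : (↑(a * b) : (Fin n → ℂ) ≃ₗ[ℂ] (Fin n → ℂ)) v
        = (a : (Fin n → ℂ) ≃ₗ[ℂ] (Fin n → ℂ)) ((b : (Fin n → ℂ) ≃ₗ[ℂ] (Fin n → ℂ)) v) := rfl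
    rw [this, hb v hv, ha v hv]
  inv_mem' := by
    intro a ha v hv
    have h1 : (a : (Fin n → ℂ) ≃ₗ[ℂ] (Fin n → ℂ)) v = v := ha v hv
    have : (↑(a⁻¹) : (Fin n → ℂ) ≃ₗ[ℂ] (Fin n → ℂ)) v
        = ((a : (Fin n → ℂ) ≃ₗ[ℂ] (Fin n → ℂ)).symm) v := rfl
    rw [this]
    conv_lhs => rw [← h1]
    exact (a : (Fin n → ℂ) ≃ₗ[ℂ] (Fin n → ℂ)).symm_apply_apply v

/-- The number of orbits of `C_P` acting on the set `𝒮 = Sg/G` of left cosets of `G`. -/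
noncomputable def numOrbits {n : ℕ} (Sg G : Subgroup ((Fin n → ℂ) ≃ₗ[ℂ] (Fin n → ℂ)))
    (P : Submodule ℂ (Fin n → ℂ)) : ℕ :=
  Nat.card (MulAction.orbitRel.Quotient ↥(pointwiseStab Sg P) (↥Sg ⧸ G.subgroupOf Sg))

/-- `ℬ` is a `Sg`-orbit of reflecting hyperplanes of `Sg`. -/
def IsHyperplaneOrbit {n : ℕ} (Sg : Subgroup ((Fin n → ℂ) ≃ₗ[ℂ] (Fin n → ℂ)))
    (ℬ : Set (Submodule ℂ (Fin n → ℂ))) : Prop :=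
  ℬ.Nonempty ∧ ℬ ⊆ reflHyperplanes Sg ∧
  (∀ P ∈ ℬ, ∀ σ ∈ Sg, P.map (σ : (Fin n → ℂ) ≃ₗ[ℂ] (Fin n → ℂ)).toLinearMap ∈ ℬ) ∧
  ∀ P ∈ ℬ, ∀ Q ∈ ℬ, ∃ σ ∈ Sg, P.map (σ : (Fin n → ℂ) ≃ₗ[ℂ] (Fin n → ℂ)).toLinearMap = Q

/-- `b_i(P)`: the number of orbits of size `i` of `C_P = ⟨g_P⟩` acting on the set
`𝒮 = Σ/G` of left cosets. -/
noncomputable def orbitCount {n : ℕ} (Sg G : Subgroup ((Fin n → ℂ) ≃ₗ[ℂ] (Fin n → ℂ)))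
    (P : Submodule ℂ (Fin n → ℂ)) (i : ℕ) : ℕ :=
  Nat.card {ω : MulAction.orbitRel.Quotient ↥(pointwiseStab Sg P)
      (↥Sg ⧸ G.subgroupOf Sg) // Nat.card ω.orbit = i}
section Aux
open scoped Classical

variable {n : ℕ}

@[simp] lemma mem_fixedSubspace {g : (Fin n → ℂ) ≃ₗ[ℂ] (Fin n → ℂ)} {v : Fin n → ℂ} :
    v ∈ fixedSubspace g ↔ g v = v := Iff.rfl

lemma fixedSubspace_eq_top_iff {g : (Fin n → ℂ) ≃ₗ[ℂ] (Fin n → ℂ)} :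
    fixedSubspace g = ⊤ ↔ g = 1 := by
  constructor
  · intro h
    apply LinearEquiv.ext
    intro v
    have := Submodule.eq_top_iff'.1 h v
    simpa using this
  · rintro rfl
    rw [Submodule.eq_top_iff']
    intro v
    simp

lemma fixedSubspace_conj (σ g : (Fin n → ℂ) ≃ₗ[ℂ] (Fin n → ℂ)) :
    fixedSubspace (σ * g * σ⁻¹) = (fixedSubspace g).map σ.toLinearMap := by
  ext v
  simp only [mem_fixedSubspace, Submodule.mem_map]
  constructor
  · intro h
    refine ⟨σ⁻¹ v, ?_, σ.apply_symm_apply v⟩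
    show g (σ⁻¹ v) = σ⁻¹ v
    have h2 : σ (g (σ⁻¹ v)) = v := h
    calc g (σ⁻¹ v) = σ⁻¹ (σ (g (σ⁻¹ v))) := (σ.symm_apply_apply _).symm
      _ = σ⁻¹ v := by rw [h2]
  · rintro ⟨w, hw, rfl⟩
    show σ (g (σ⁻¹ (σ w))) = σ w
    have h3 : σ⁻¹ (σ w) = w := σ.symm_apply_apply w
    rw [h3]
    show σ (g w) = σ w
    rw [hw]

lemma isReflection_conj {σ g : (Fin n → ℂ) ≃ₗ[ℂ] (Fin n → ℂ)} (h : IsReflection g) :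
    IsReflection (σ * g * σ⁻¹) := by
  obtain ⟨h1, h2⟩ := h
  constructor
  · intro hc
    apply h1
    have hg : g = σ⁻¹ * (σ * g * σ⁻¹) * σ := by group
    rw [hg, hc]
    group
  · rw [fixedSubspace_conj, LinearEquiv.finrank_map_eq, h2]

lemma finrank_self (n : ℕ) : Module.finrank ℂ (Fin n → ℂ) = n := by
  rw [Module.finrank_pi]
  simp

lemma fixedSubspace_eq_of_le {g : (Fin n → ℂ) ≃ₗ[ℂ] (Fin n → ℂ)} (hg : g ≠ 1)
    {P : Submodule ℂ (Fin n → ℂ)} (hP : Module.finrank ℂ P = n - 1)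
    (hle : P ≤ fixedSubspace g) : fixedSubspace g = P := by
  have hne : fixedSubspace g ≠ ⊤ := fun h => hg (fixedSubspace_eq_top_iff.1 h)
  have hlt : Module.finrank ℂ (fixedSubspace g) < n := by
    have := Submodule.finrank_lt hne (K := ℂ) (V := Fin n → ℂ)
    rwa [finrank_self] at this
  have h1 : Module.finrank ℂ (fixedSubspace g) ≤ n - 1 := Nat.le_pred_of_lt hlt
  have h2 : Module.finrank ℂ P ≤ Module.finrank ℂ (fixedSubspace g) :=
    Submodule.finrank_mono hle
  exact (Submodule.eq_of_le_of_finrank_eq hle (le_antisymm (hP ▸ h2) (hP ▸ h1))).symm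

lemma finrank_of_mem_reflHyperplanes {Sg : Subgroup ((Fin n → ℂ) ≃ₗ[ℂ] (Fin n → ℂ))}
    {P : Submodule ℂ (Fin n → ℂ)} (hP : P ∈ reflHyperplanes Sg) :
    Module.finrank ℂ P = n - 1 := by
  obtain ⟨g, _, hg, rfl⟩ := hP
  exact hg.2

lemma mem_pointwiseStab_iff' {Sg : Subgroup ((Fin n → ℂ) ≃ₗ[ℂ] (Fin n → ℂ))}
    {P : Submodule ℂ (Fin n → ℂ)} (g : ↥Sg) :
    g ∈ pointwiseStab Sg P ↔ P ≤ fixedSubspace (g : (Fin n → ℂ) ≃ₗ[ℂ] (Fin n → ℂ)) :=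
  Iff.rfl

lemma mem_pointwiseStab_iff {Sg : Subgroup ((Fin n → ℂ) ≃ₗ[ℂ] (Fin n → ℂ))}
    {P : Submodule ℂ (Fin n → ℂ)} (hP : P ∈ reflHyperplanes Sg) (g : ↥Sg) :
    g ∈ pointwiseStab Sg P ↔ g = 1 ∨
      (IsReflection (g : (Fin n → ℂ) ≃ₗ[ℂ] (Fin n → ℂ)) ∧
        fixedSubspace (g : (Fin n → ℂ) ≃ₗ[ℂ] (Fin n → ℂ)) = P) := by
  rw [mem_pointwiseStab_iff']
  constructor
  · intro hle
    by_cases h1 : g = 1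
    · exact Or.inl h1
    · right
      have hg1 : (g : (Fin n → ℂ) ≃ₗ[ℂ] (Fin n → ℂ)) ≠ 1 := by
        intro hc
        exact h1 (by ext : 1; exact hc)
      have heq := fixedSubspace_eq_of_le hg1 (finrank_of_mem_reflHyperplanes hP) hle
      exact ⟨⟨hg1, heq ▸ finrank_of_mem_reflHyperplanes hP⟩, heq⟩
  · rintro (rfl | ⟨-, heq⟩)
    · intro v _
      rfl
    · rw [heq]

end Aux

section Counting
open scoped Classical
open MulAction

variable {n : ℕ} (Sg G : Subgroup ((Fin n → ℂ) ≃ₗ[ℂ] (Fin n → ℂ))) [Fintype ↥Sg]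

/-- `c_P = (fib P).card + 1`. -/
lemma card_pointwiseStab {P : Submodule ℂ (Fin n → ℂ)} (hP : P ∈ reflHyperplanes Sg) :
    Nat.card ↥(pointwiseStab Sg P) =
      (Finset.univ.filter (fun g : ↥Sg =>
        IsReflection (g : (Fin n → ℂ) ≃ₗ[ℂ] (Fin n → ℂ)) ∧
        fixedSubspace (g : (Fin n → ℂ) ≃ₗ[ℂ] (Fin n → ℂ)) = P)).card + 1 := by
  rw [Nat.card_eq_fintype_card, Fintype.card_subtype]
  have : Finset.univ.filter (fun g : ↥Sg => g ∈ pointwiseStab Sg P) =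
      insert 1 (Finset.univ.filter (fun g : ↥Sg =>
        IsReflection (g : (Fin n → ℂ) ≃ₗ[ℂ] (Fin n → ℂ)) ∧
        fixedSubspace (g : (Fin n → ℂ) ≃ₗ[ℂ] (Fin n → ℂ)) = P)) := by
    ext g
    simp only [Finset.mem_filter, Finset.mem_univ, true_and, Finset.mem_insert]
    exact mem_pointwiseStab_iff hP g
  rw [this, Finset.card_insert_of_notMem]
  simp only [Finset.mem_filter, Finset.mem_univ, true_and, not_and]
  intro h
  exact absurd rfl h.1

/-- Burnside. -/
lemma burnside_eq (P : Submodule ℂ (Fin n → ℂ)) :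
    numOrbits Sg G P * Nat.card ↥(pointwiseStab Sg P) =
      ∑ g ∈ Finset.univ.filter (fun g : ↥Sg => g ∈ pointwiseStab Sg P),
        Nat.card {q : ↥Sg ⧸ G.subgroupOf Sg // g • q = q} := by
  rw [Finset.sum_subtype (p := fun g : ↥Sg => g ∈ pointwiseStab Sg P) _
    (fun x => by simp) (fun g : ↥Sg => Nat.card {q : ↥Sg ⧸ G.subgroupOf Sg // g • q = q})]
  have key := MulAction.sum_card_fixedBy_eq_card_orbits_mul_card_group
    ↥(pointwiseStab Sg P) (↥Sg ⧸ G.subgroupOf Sg)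
  rw [numOrbits, Nat.card_eq_fintype_card, Nat.card_eq_fintype_card, ← key]
  apply Finset.sum_congr rfl
  intro a _
  rw [Nat.card_eq_fintype_card]
  apply Fintype.card_congr
  exact Equiv.subtypeEquivRight (fun q => Iff.rfl)

/-- Fiberwise orbit counting. -/
lemma sum_orbitCount (P : Submodule ℂ (Fin n → ℂ)) (F : ℕ → ℚ) :
    ∑ i ∈ Finset.Icc 1 (Nat.card (↥Sg ⧸ G.subgroupOf Sg)),
        (orbitCount Sg G P i : ℚ) * F i
      = ∑ ω : MulAction.orbitRel.Quotient ↥(pointwiseStab Sg P) (↥Sg ⧸ G.subgroupOf Sg),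
          F (Nat.card ω.orbit) := by
  have hmaps : ∀ ω : MulAction.orbitRel.Quotient ↥(pointwiseStab Sg P)
      (↥Sg ⧸ G.subgroupOf Sg), ω ∈ Finset.univ →
      Nat.card ω.orbit ∈ Finset.Icc 1 (Nat.card (↥Sg ⧸ G.subgroupOf Sg)) := by
    intro ω _
    rw [Finset.mem_Icc]
    constructor
    · haveI : Nonempty ω.orbit := (MulAction.orbitRel.Quotient.nonempty_orbit ω).to_subtype
      exact Nat.one_le_iff_ne_zero.2 (Nat.card_ne_zero.2 ⟨inferInstance, inferInstance⟩)
    · exact Nat.card_le_card_of_injective (Subtype.val : ω.orbit → _) Subtype.val_injective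
  rw [← Finset.sum_fiberwise_of_maps_to hmaps
    (fun ω => F (Nat.card ω.orbit))]
  apply Finset.sum_congr rfl
  intro i _
  have : ∀ ω ∈ Finset.univ.filter (fun ω : MulAction.orbitRel.Quotient
      ↥(pointwiseStab Sg P) (↥Sg ⧸ G.subgroupOf Sg) => Nat.card ω.orbit = i),
      F (Nat.card ω.orbit) = F i := by
    intro ω hω
    rw [(Finset.mem_filter.1 hω).2]
  rw [Finset.sum_congr rfl this, Finset.sum_const, orbitCount, Nat.card_eq_fintype_card,
    Fintype.card_subtype, nsmul_eq_mul]

/-- The orbit sizes sum to the cardinality of the acted-on set. -/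
lemma sum_card_orbit (P : Submodule ℂ (Fin n → ℂ)) :
    ∑ ω : MulAction.orbitRel.Quotient ↥(pointwiseStab Sg P) (↥Sg ⧸ G.subgroupOf Sg),
        Nat.card ω.orbit = Nat.card (↥Sg ⧸ G.subgroupOf Sg) := by
  have e := (MulAction.selfEquivSigmaOrbits' ↥(pointwiseStab Sg P)
    (↥Sg ⧸ G.subgroupOf Sg))
  rw [Nat.card_eq_fintype_card, Fintype.card_congr e, Fintype.card_sigma]
  apply Finset.sum_congr rfl
  intro ω _
  rw [Nat.card_eq_fintype_card]

/-- The per-hyperplane identity. -/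
lemma perP {P : Submodule ℂ (Fin n → ℂ)} (hP : P ∈ reflHyperplanes Sg) :
    (Nat.card ↥(pointwiseStab Sg P) : ℚ) *
        ∑ i ∈ Finset.Icc 2 (Nat.card (↥Sg ⧸ G.subgroupOf Sg)),
          (orbitCount Sg G P i : ℚ) * ((i : ℚ) - 1)
      = ((Finset.univ.filter (fun g : ↥Sg =>
            IsReflection (g : (Fin n → ℂ) ≃ₗ[ℂ] (Fin n → ℂ)) ∧
            fixedSubspace (g : (Fin n → ℂ) ≃ₗ[ℂ] (Fin n → ℂ)) = P)).card : ℚ) *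
          (Nat.card (↥Sg ⧸ G.subgroupOf Sg) : ℚ)
        - ∑ g ∈ Finset.univ.filter (fun g : ↥Sg =>
            IsReflection (g : (Fin n → ℂ) ≃ₗ[ℂ] (Fin n → ℂ)) ∧
            fixedSubspace (g : (Fin n → ℂ) ≃ₗ[ℂ] (Fin n → ℂ)) = P),
            (Nat.card {q : ↥Sg ⧸ G.subgroupOf Sg // g • q = q} : ℚ) := by
  set ℓ := Nat.card (↥Sg ⧸ G.subgroupOf Sg) with hℓdef
  set fib := Finset.univ.filter (fun g : ↥Sg =>
      IsReflection (g : (Fin n → ℂ) ≃ₗ[ℂ] (Fin n → ℂ)) ∧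
      fixedSubspace (g : (Fin n → ℂ) ≃ₗ[ℂ] (Fin n → ℂ)) = P) with hfib
  have hℓ1 : 1 ≤ ℓ := Nat.one_le_iff_ne_zero.2 (Nat.card_ne_zero.2 ⟨inferInstance, inferInstance⟩)
  -- the inner sum over `Icc 2 ℓ` equals the one over `Icc 1 ℓ`
  have hIcc : Finset.Icc 1 ℓ = insert 1 (Finset.Icc 2 ℓ) := by
    ext x
    simp only [Finset.mem_Icc, Finset.mem_insert]
    omega
  have hsum12 : ∑ i ∈ Finset.Icc 1 ℓ, (orbitCount Sg G P i : ℚ) * ((i : ℚ) - 1)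
      = ∑ i ∈ Finset.Icc 2 ℓ, (orbitCount Sg G P i : ℚ) * ((i : ℚ) - 1) := by
    rw [hIcc, Finset.sum_insert (by simp)]
    norm_num
  -- evaluate the `Icc 1 ℓ` sum via orbits
  have hA : ∑ i ∈ Finset.Icc 2 ℓ, (orbitCount Sg G P i : ℚ) * ((i : ℚ) - 1)
      = (ℓ : ℚ) - (numOrbits Sg G P : ℚ) := by
    rw [← hsum12, sum_orbitCount Sg G P (fun i => (i : ℚ) - 1)]
    rw [Finset.sum_sub_distrib, Finset.sum_const, Finset.card_univ, nsmul_eq_mul, mul_one]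
    rw [← Nat.cast_sum, sum_card_orbit Sg G P, ← hℓdef]
    rw [numOrbits, Nat.card_eq_fintype_card]
  -- Burnside, split off the identity
  have hstab : Finset.univ.filter (fun g : ↥Sg => g ∈ pointwiseStab Sg P)
      = insert 1 fib := by
    ext g
    simp only [Finset.mem_filter, Finset.mem_univ, true_and, Finset.mem_insert, hfib]
    rw [mem_pointwiseStab_iff hP g]
  have h1fib : (1 : ↥Sg) ∉ fib := by
    simp only [hfib, Finset.mem_filter, Finset.mem_univ, true_and, not_and]
    intro h
    exact absurd rfl h.1
  have hfix1 : Nat.card {q : ↥Sg ⧸ G.subgroupOf Sg // (1 : ↥Sg) • q = q} = ℓ := by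
    rw [hℓdef]
    exact Nat.card_congr (Equiv.subtypeUnivEquiv (fun q => one_smul _ q))
  have hburn : (numOrbits Sg G P : ℚ) * (Nat.card ↥(pointwiseStab Sg P) : ℚ)
      = (ℓ : ℚ) + ∑ g ∈ fib, (Nat.card {q : ↥Sg ⧸ G.subgroupOf Sg // g • q = q} : ℚ) := by
    have := burnside_eq Sg G P
    rw [hstab, Finset.sum_insert h1fib, hfix1] at this
    exact_mod_cast this
  have hcard := card_pointwiseStab Sg hP
  rw [← hfib] at hcard
  rw [hcard] at hburn
  push_cast at hburn
  rw [hA, hcard]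
  push_cast
  linear_combination -hburn

/-- Conjugation bijection: the number of reflections of `Sg` fixing a coset `q`
equals the number of reflections in `G`. -/
lemma card_refl_fixing_coset (hG : G ≤ Sg) (q : ↥Sg ⧸ G.subgroupOf Sg) :
    (Finset.univ.filter (fun g : ↥Sg =>
        IsReflection (g : (Fin n → ℂ) ≃ₗ[ℂ] (Fin n → ℂ)) ∧ g • q = q)).card
      = Nat.card {x : (Fin n → ℂ) ≃ₗ[ℂ] (Fin n → ℂ) // x ∈ G ∧ IsReflection x} := by
  obtain ⟨σ, rfl⟩ := QuotientGroup.mk_surjective q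
  have hcond : ∀ g : ↥Sg,
      (g • (QuotientGroup.mk σ : ↥Sg ⧸ G.subgroupOf Sg) = QuotientGroup.mk σ) ↔
        σ⁻¹ * g * σ ∈ G.subgroupOf Sg := by
    intro g
    show (QuotientGroup.mk (g * σ) : ↥Sg ⧸ G.subgroupOf Sg) = QuotientGroup.mk σ ↔ _
    rw [QuotientGroup.eq]
    have h1 : (g * σ)⁻¹ * σ = (σ⁻¹ * g * σ)⁻¹ := by group
    rw [h1, Subgroup.inv_mem_iff]
  have hfilter : Finset.univ.filter (fun g : ↥Sg =>
      IsReflection (g : (Fin n → ℂ) ≃ₗ[ℂ] (Fin n → ℂ)) ∧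
        g • (QuotientGroup.mk σ : ↥Sg ⧸ G.subgroupOf Sg) = QuotientGroup.mk σ)
      = Finset.univ.filter (fun g : ↥Sg =>
        IsReflection (g : (Fin n → ℂ) ≃ₗ[ℂ] (Fin n → ℂ)) ∧
          σ⁻¹ * g * σ ∈ G.subgroupOf Sg) := by
    apply Finset.filter_congr
    intro g _
    rw [hcond g]
  rw [hfilter, ← Fintype.card_subtype, ← Nat.card_eq_fintype_card]
  apply Nat.card_congr
  refine
    { toFun := fun x => ⟨((σ⁻¹ * x.1 * σ : ↥Sg) : (Fin n → ℂ) ≃ₗ[ℂ] (Fin n → ℂ)),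
        Subgroup.mem_subgroupOf.1 x.2.2, ?_⟩,
      invFun := fun y => ⟨σ * ⟨y.1, hG y.2.1⟩ * σ⁻¹, ?_, ?_⟩,
      left_inv := ?_, right_inv := ?_ }
  · have h := isReflection_conj (σ := ((σ : (Fin n → ℂ) ≃ₗ[ℂ] (Fin n → ℂ)))⁻¹) x.2.1
    rw [inv_inv] at h
    convert h using 2
    exact rfl
  · have h := isReflection_conj (σ := (σ : (Fin n → ℂ) ≃ₗ[ℂ] (Fin n → ℂ))) y.2.2
    convert h using 2
    exact rfl
  · have h2 : σ⁻¹ * (σ * (⟨y.1, hG y.2.1⟩ : ↥Sg) * σ⁻¹) * σ = ⟨y.1, hG y.2.1⟩ := by group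
    rw [h2, Subgroup.mem_subgroupOf]
    exact y.2.1
  · intro x
    apply Subtype.ext
    apply Subtype.ext
    push_cast
    group
  · intro y
    apply Subtype.ext
    push_cast
    group

lemma main_aux (hG : G ≤ Sg) :
    (∑ᶠ P ∈ reflHyperplanes Sg,
        ((Nat.card ↥(pointwiseStab Sg P) : ℚ) / 2 *
          ∑ i ∈ Finset.Icc 2 (Nat.card (↥Sg ⧸ G.subgroupOf Sg)),
            (orbitCount Sg G P i : ℚ) * ((i : ℚ) - 1))) =
      (Nat.card (↥Sg ⧸ G.subgroupOf Sg) : ℚ) / 2 *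
        ((Nat.card {g : (Fin n → ℂ) ≃ₗ[ℂ] (Fin n → ℂ) // g ∈ Sg ∧ IsReflection g} : ℚ) -
          (Nat.card {g : (Fin n → ℂ) ≃ₗ[ℂ] (Fin n → ℂ) // g ∈ G ∧ IsReflection g} : ℚ)) := by
  set ℓ := Nat.card (↥Sg ⧸ G.subgroupOf Sg) with hℓdef
  set Refl := Finset.univ.filter (fun g : ↥Sg =>
    IsReflection (g : (Fin n → ℂ) ≃ₗ[ℂ] (Fin n → ℂ))) with hRefl
  have h𝒫 : (reflHyperplanes Sg).Finite := by
    apply Set.Finite.subset (Set.finite_range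
      (fun g : ↥Sg => fixedSubspace (g : (Fin n → ℂ) ≃ₗ[ℂ] (Fin n → ℂ))))
    rintro P ⟨g, hg, _, rfl⟩
    exact ⟨⟨g, hg⟩, rfl⟩
  rw [← Set.Finite.coe_toFinset h𝒫, finsum_mem_coe_finset]
  have hmapsto : ∀ g ∈ Refl,
      fixedSubspace (g : (Fin n → ℂ) ≃ₗ[ℂ] (Fin n → ℂ)) ∈ h𝒫.toFinset := by
    intro g hg
    rw [Set.Finite.mem_toFinset]
    exact ⟨(g : (Fin n → ℂ) ≃ₗ[ℂ] (Fin n → ℂ)), g.2,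
      (Finset.mem_filter.1 hg).2, rfl⟩
  -- ∑ over 𝒫 of fiber cardinalities = |Refl|
  have hfibcard : ∑ P ∈ h𝒫.toFinset, ((Finset.univ.filter (fun g : ↥Sg =>
      IsReflection (g : (Fin n → ℂ) ≃ₗ[ℂ] (Fin n → ℂ)) ∧
      fixedSubspace (g : (Fin n → ℂ) ≃ₗ[ℂ] (Fin n → ℂ)) = P)).card : ℚ)
      = (Refl.card : ℚ) := by
    have := Finset.card_eq_sum_card_fiberwise hmapsto
    rw [this]
    push_cast
    apply Finset.sum_congr rfl
    intro P _
    rw [hRefl, Finset.filter_filter]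
  -- ∑ over 𝒫 of fixed-point-count sums = ∑ over reflections
  have hF : ∑ P ∈ h𝒫.toFinset, ∑ g ∈ Finset.univ.filter (fun g : ↥Sg =>
        IsReflection (g : (Fin n → ℂ) ≃ₗ[ℂ] (Fin n → ℂ)) ∧
        fixedSubspace (g : (Fin n → ℂ) ≃ₗ[ℂ] (Fin n → ℂ)) = P),
        ((Nat.card {q : ↥Sg ⧸ G.subgroupOf Sg // g • q = q} : ℚ))
      = ∑ g ∈ Refl, ((Nat.card {q : ↥Sg ⧸ G.subgroupOf Sg // g • q = q} : ℚ)) := by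
    have h2 : ∀ P ∈ h𝒫.toFinset, (Finset.univ.filter (fun g : ↥Sg =>
        IsReflection (g : (Fin n → ℂ) ≃ₗ[ℂ] (Fin n → ℂ)) ∧
        fixedSubspace (g : (Fin n → ℂ) ≃ₗ[ℂ] (Fin n → ℂ)) = P))
        = Refl.filter (fun g : ↥Sg =>
          fixedSubspace (g : (Fin n → ℂ) ≃ₗ[ℂ] (Fin n → ℂ)) = P) := by
      intro P _
      rw [hRefl, Finset.filter_filter]
    rw [Finset.sum_congr rfl (fun P hP => by rw [h2 P hP])]
    exact Finset.sum_fiberwise_of_maps_to hmapsto _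
  -- the double-counting step
  have hswap : ∑ g ∈ Refl, ((Nat.card {q : ↥Sg ⧸ G.subgroupOf Sg // g • q = q}) : ℚ)
      = (ℓ : ℚ) * (Nat.card {x : (Fin n → ℂ) ≃ₗ[ℂ] (Fin n → ℂ) // x ∈ G ∧ IsReflection x} : ℚ) := by
    have h1 : ∀ g : ↥Sg, Nat.card {q : ↥Sg ⧸ G.subgroupOf Sg // g • q = q}
        = (Finset.univ.filter (fun q : ↥Sg ⧸ G.subgroupOf Sg => g • q = q)).card := by
      intro g
      rw [Nat.card_eq_fintype_card, Fintype.card_subtype]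
    have h2 : ∑ g ∈ Refl, (Finset.univ.filter
          (fun q : ↥Sg ⧸ G.subgroupOf Sg => g • q = q)).card
        = ∑ q : ↥Sg ⧸ G.subgroupOf Sg, (Refl.filter (fun g : ↥Sg => g • q = q)).card := by
      simp_rw [Finset.card_filter]
      rw [Finset.sum_comm]
    have h3 : ∀ q : ↥Sg ⧸ G.subgroupOf Sg, (Refl.filter (fun g : ↥Sg => g • q = q)).card
        = Nat.card {x : (Fin n → ℂ) ≃ₗ[ℂ] (Fin n → ℂ) // x ∈ G ∧ IsReflection x} := by
      intro q
      rw [hRefl, Finset.filter_filter]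
      exact card_refl_fixing_coset Sg G hG q
    have h4 : ∑ g ∈ Refl, (Finset.univ.filter
          (fun q : ↥Sg ⧸ G.subgroupOf Sg => g • q = q)).card
        = ℓ * Nat.card {x : (Fin n → ℂ) ≃ₗ[ℂ] (Fin n → ℂ) // x ∈ G ∧ IsReflection x} := by
      rw [h2]
      simp_rw [h3]
      rw [Finset.sum_const, Finset.card_univ, smul_eq_mul, hℓdef,
        Nat.card_eq_fintype_card (α := ↥Sg ⧸ G.subgroupOf Sg)]
    simp_rw [h1]
    exact_mod_cast h4
  -- |ℛ(Σ)| = |Refl|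
  have hRS : (Nat.card {x : (Fin n → ℂ) ≃ₗ[ℂ] (Fin n → ℂ) // x ∈ Sg ∧ IsReflection x} : ℚ)
      = (Refl.card : ℚ) := by
    have e : {x : (Fin n → ℂ) ≃ₗ[ℂ] (Fin n → ℂ) // x ∈ Sg ∧ IsReflection x}
        ≃ {g : ↥Sg // IsReflection (g : (Fin n → ℂ) ≃ₗ[ℂ] (Fin n → ℂ))} :=
      { toFun := fun x => ⟨⟨x.1, x.2.1⟩, x.2.2⟩,
        invFun := fun g => ⟨(g.1 : (Fin n → ℂ) ≃ₗ[ℂ] (Fin n → ℂ)), g.1.2, g.2⟩,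
        left_inv := fun _ => rfl, right_inv := fun _ => rfl }
    rw [Nat.card_congr e, Nat.card_eq_fintype_card, Fintype.card_subtype, hRefl]
  -- put everything together
  have hmain : ∀ P ∈ h𝒫.toFinset,
      (Nat.card ↥(pointwiseStab Sg P) : ℚ) / 2 *
        ∑ i ∈ Finset.Icc 2 ℓ, (orbitCount Sg G P i : ℚ) * ((i : ℚ) - 1)
      = (((Finset.univ.filter (fun g : ↥Sg =>
            IsReflection (g : (Fin n → ℂ) ≃ₗ[ℂ] (Fin n → ℂ)) ∧
            fixedSubspace (g : (Fin n → ℂ) ≃ₗ[ℂ] (Fin n → ℂ)) = P)).card : ℚ) * (ℓ : ℚ)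
        - ∑ g ∈ Finset.univ.filter (fun g : ↥Sg =>
            IsReflection (g : (Fin n → ℂ) ≃ₗ[ℂ] (Fin n → ℂ)) ∧
            fixedSubspace (g : (Fin n → ℂ) ≃ₗ[ℂ] (Fin n → ℂ)) = P),
            (Nat.card {q : ↥Sg ⧸ G.subgroupOf Sg // g • q = q} : ℚ)) / 2 := by
    intro P hP
    rw [div_mul_eq_mul_div, perP Sg G ((Set.Finite.mem_toFinset h𝒫).1 hP)]
  rw [Finset.sum_congr rfl hmain, ← Finset.sum_div, Finset.sum_sub_distrib,
    ← Finset.sum_mul, hfibcard, hF, hswap, hRS]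
  ring

end Counting

/-- With `e(G,P) = (|C_P|/2)·Σ_{i≥2} b_i(g_P)·(i−1)`, one has
`Σ_{P∈𝒫} e(G,P) = (ℓ/2)·(|ℛ(Σ)| − |ℛ(G)|)`. -/
theorem stmt10 {n : ℕ} (Sg G : Subgroup ((Fin n → ℂ) ≃ₗ[ℂ] (Fin n → ℂ)))
    (hfin : Finite ↥Sg) (hG : G ≤ Sg) (ℓ : ℕ) (hℓ : ℓ = (G.subgroupOf Sg).index) :
    (∑ᶠ P ∈ reflHyperplanes Sg,
        ((Nat.card ↥(pointwiseStab Sg P) : ℚ) / 2 *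
          ∑ i ∈ Finset.Icc 2 ℓ, (orbitCount Sg G P i : ℚ) * ((i : ℚ) - 1))) =
      (ℓ : ℚ) / 2 *
        ((Nat.card {g : (Fin n → ℂ) ≃ₗ[ℂ] (Fin n → ℂ) // g ∈ Sg ∧ IsReflection g} : ℚ) -
          (Nat.card {g : (Fin n → ℂ) ≃ₗ[ℂ] (Fin n → ℂ) // g ∈ G ∧ IsReflection g} : ℚ)) := by
  obtain ⟨inst⟩ := nonempty_fintype ↥Sg
  subst hℓ
  have hidx : (G.subgroupOf Sg).index = Nat.card (↥Sg ⧸ G.subgroupOf Sg) := rfl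
  rw [hidx]
  exact main_aux Sg G hG
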